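/- For all integers k, m, n ≥ 0, Ш_{n+k,m} · Ш_{k,n}^{↑m} = Ш_{k,m+n} · Ш_{n,m} in the group algebra 𝕜B_∞. -/

import Mathlib

namespace BraidPaper

/-- Relations of the infinite Artin braid group `B_∞`.  The generator with index `n : ℕ`
represents the Artin generator `σ_{n+1}` (so generators are `σ_1, σ_2, …`). -/
def BraidRels : Set (FreeGroup ℕ) :=
  {r | (∃ i : ℕ, r = .of i * .of (i + 1) * .of i * (.of (i + 1) * .of i * .of (i + 1))⁻¹) ∨
       (∃ i j : ℕ, i + 2 ≤ j ∧ r = .of i * .of j * (.of j * .of i)⁻¹)}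

/-- The infinite Artin braid group `B_∞`, presented by generators `σ_1, σ_2, …` and the
braid and far-commutativity relations. -/
abbrev BInf : Type := PresentedGroup BraidRels

/-- The Artin generator `σ i` of `B_∞` (meaningful for `i ≥ 1`). -/
def σ (i : ℕ) : BInf := PresentedGroup.of (i - 1)

lemma rel_eq_one {r : FreeGroup ℕ} (hr : r ∈ BraidRels) : PresentedGroup.mk BraidRels r = 1 := by
  have : r ∈ Subgroup.normalClosure BraidRels := Subgroup.subset_normalClosure hr
  exact (QuotientGroup.eq_one_iff r).mpr this

lemma gen_braid (i : ℕ) :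
    (PresentedGroup.of i : BInf) * .of (i + 1) * .of i = .of (i + 1) * .of i * .of (i + 1) := by
  have h := rel_eq_one (Or.inl ⟨i, rfl⟩)
  rw [map_mul, map_mul, map_mul, map_inv, map_mul, map_mul, mul_inv_eq_one] at h
  exact h

lemma gen_comm {i j : ℕ} (hij : i + 2 ≤ j) :
    (PresentedGroup.of i : BInf) * .of j = .of j * .of i := by
  have h := rel_eq_one (Or.inr ⟨i, j, hij, rfl⟩)
  rw [map_mul, map_mul, map_inv, map_mul, mul_inv_eq_one] at h
  exact h

/-- The shift endomorphism `↑ℓ : B_∞ → B_∞`, `σ_i ↦ σ_{i+ℓ}`. -/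
def shift (l : ℕ) : BInf →* BInf :=
  PresentedGroup.toGroup (f := fun n => (PresentedGroup.of (n + l) : BInf)) (by
    rintro r (⟨i, rfl⟩ | ⟨i, j, hij, rfl⟩) <;>
      simp only [map_mul, map_inv, FreeGroup.lift_apply_of, mul_inv_eq_one]
    · have h1 : i + 1 + l = i + l + 1 := by omega
      rw [h1]; exact gen_braid (i + l)
    · exact gen_comm (by omega : (i + l) + 2 ≤ j + l))

/-- The ascending product `σ_i σ_{i+1} ⋯ σ_{i+l-1}` (of `l` factors). -/
def asc (i l : ℕ) : BInf := ((List.range l).map fun t => σ (i + t)).prod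

/-- The descending product `σ_i σ_{i-1} ⋯ σ_{i-k+1}` (of `k` factors). -/
def desc (i k : ℕ) : BInf := ((List.range k).map fun t => σ (i - t)).prod

/-- The block transposition braid
`β_{k,l} = (σ_k σ_{k+1} ⋯ σ_{k+l-1})(σ_{k-1} σ_k ⋯ σ_{k+l-2}) ⋯ (σ_1 σ_2 ⋯ σ_l)`,
with `β_{k,0} = β_{0,l} = 1`. -/
def β (k l : ℕ) : BInf := ((List.range k).map fun r => asc (k - r) l).prod

/-- The positive (Garside) lift `ω_a = β_{1,1} β_{2,1} ⋯ β_{a-1,1}` of the longest element of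
the symmetric group `S_a`, with `ω_0 = ω_1 = 1`. -/
def ω (a : ℕ) : BInf := ((List.range (a - 1)).map fun t => β (t + 1) 1).prod

/-- The copy of the braid group `B_n` inside `B_∞`: the subgroup generated by
`σ_1, …, σ_{n-1}`. -/
def BSub (n : ℕ) : Subgroup BInf := Subgroup.closure {g | ∃ i, 1 ≤ i ∧ i < n ∧ g = σ i}


variable (𝕜 : Type) [CommRing 𝕜]

/-- The canonical embedding of `B_∞` into its group algebra `𝕜B_∞`. -/
noncomputable def ι (g : BInf) : MonoidAlgebra 𝕜 BInf := MonoidAlgebra.of 𝕜 BInf g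

/-- The shift `↑ℓ` extended (as an algebra homomorphism) to the group algebra `𝕜B_∞`. -/
noncomputable def shiftA (l : ℕ) : MonoidAlgebra 𝕜 BInf →ₐ[𝕜] MonoidAlgebra 𝕜 BInf :=
  MonoidAlgebra.mapDomainAlgHom 𝕜 𝕜 (shift l)

/-- The braid shuffle elements `Ш_{m,n} ∈ 𝕜B_∞` (for natural `m, n`), determined by
`Ш_{0,n} = Ш_{m,0} = 1` and the Pascal-type recursion
`Ш_{m,n} = Ш_{m-1,n} + Ш_{m,n-1} β_{m,1}^{↑(n-1)}`. -/
noncomputable def Sh : ℕ → ℕ → MonoidAlgebra 𝕜 BInf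
  | 0, _ => 1
  | _ + 1, 0 => 1
  | m + 1, n + 1 => Sh m (n + 1) + Sh (m + 1) n * ι 𝕜 (shift n (β (m + 1) 1))
  termination_by m n => (m, n)

/-- The braid shuffle elements `Ш_{m,n} ∈ 𝕜B_∞` for integer indices: `Ш_{m,n} = 0` whenever
`m < 0` or `n < 0`. -/
noncomputable def ShZ (m n : ℤ) : MonoidAlgebra 𝕜 BInf :=
  if 0 ≤ m ∧ 0 ≤ n then Sh 𝕜 m.toNat n.toNat else 0

/-- The braid Pochhammer symbol
`P_{k,n}(x,y) = (x - β_{k,1} y)(x - β_{k+1,1} y) ⋯ (x - β_{k+n-1,1} y) ∈ 𝕜B_∞`. -/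
noncomputable def Poch (k n : ℕ) (x y : 𝕜) : MonoidAlgebra 𝕜 BInf :=
  ((List.range n).map fun t =>
    algebraMap 𝕜 (MonoidAlgebra 𝕜 BInf) x - algebraMap 𝕜 (MonoidAlgebra 𝕜 BInf) y * ι 𝕜 (β (k + t) 1)).prod


/-! ### Auxiliary machinery for the shuffle identity -/

lemma σ_succ (q : ℕ) : σ (q + 1) = PresentedGroup.of q := by simp [σ]

lemma sigma_braid (p : ℕ) :
    σ (p+1) * σ (p+2) * σ (p+1) = σ (p+2) * σ (p+1) * σ (p+2) := by
  rw [σ_succ p, show σ (p+2) = PresentedGroup.of (p+1) from σ_succ (p+1)]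
  exact gen_braid p

lemma sigma_comm {p q : ℕ} (h : p + 2 ≤ q) :
    σ (p+1) * σ (q+1) = σ (q+1) * σ (p+1) := by
  rw [σ_succ p, σ_succ q]
  exact gen_comm h

/-- The descending run `σ (b+a-1) σ (b+a-2) ⋯ σ b` of `a` letters. -/
def run (b : ℕ) : ℕ → BInf
  | 0 => 1
  | a + 1 => σ (b + a) * run b a

@[simp] lemma run_zero (b : ℕ) : run b 0 = 1 := rfl

lemma run_succ (b a : ℕ) : run b (a+1) = σ (b + a) * run b a := rfl

lemma shift_of (l q : ℕ) : shift l (PresentedGroup.of q) = PresentedGroup.of (q + l) :=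
  PresentedGroup.toGroup.of _

lemma shift_σ (l q : ℕ) : shift l (σ (q+1)) = σ (q+1+l) := by
  rw [σ_succ, shift_of, show q+1+l = (q+l)+1 by omega, σ_succ]

lemma shift_run (l b a : ℕ) : shift l (run (b+1) a) = run (b+1+l) a := by
  induction a with
  | zero => simp
  | succ a ih =>
    rw [run_succ, map_mul, ih, run_succ]
    congr 1
    rw [show b+1+a = (b+a)+1 by omega, shift_σ, show b+a+1+l = b+1+l+a by omega]

lemma run_comm_high (b a j : ℕ) (h : b + a ≤ j) :
    run (b+1) a * σ (j+2) = σ (j+2) * run (b+1) a := by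
  induction a with
  | zero => simp
  | succ a ih =>
    have hc : σ (b+1+a) * σ (j+2) = σ (j+2) * σ (b+1+a) := by
      rw [show b+1+a = (b+a)+1 by omega]
      exact sigma_comm (p := b+a) (q := j+1) (by omega)
    rw [run_succ]
    calc σ (b+1+a) * run (b+1) a * σ (j+2)
        = σ (b+1+a) * (σ (j+2) * run (b+1) a) := by rw [mul_assoc, ih (by omega)]
      _ = σ (j+2) * (σ (b+1+a) * run (b+1) a) := by rw [← mul_assoc, hc, mul_assoc]

lemma run_comm_low (b a j : ℕ) (h : j + 2 ≤ b) :
    run (b+1) a * σ (j+1) = σ (j+1) * run (b+1) a := by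
  induction a with
  | zero => simp
  | succ a ih =>
    have hc : σ (j+1) * σ (b+1+a) = σ (b+1+a) * σ (j+1) := by
      rw [show b+1+a = (b+a)+1 by omega]
      exact (sigma_comm (p := j) (q := b+a) (by omega))
    rw [run_succ]
    calc σ (b+1+a) * run (b+1) a * σ (j+1)
        = σ (b+1+a) * (σ (j+1) * run (b+1) a) := by rw [mul_assoc, ih]
      _ = σ (j+1) * (σ (b+1+a) * run (b+1) a) := by rw [← mul_assoc, ← hc, mul_assoc]

lemma run_conj (b a i : ℕ) (h : i + 2 ≤ a) :
    run (b+1) a * σ (b+i+2) = σ (b+i+1) * run (b+1) a := by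
  induction a with
  | zero => omega
  | succ a ih =>
    rcases Nat.lt_or_ge a (i+2) with hge | hlt
    · -- a = i + 1
      have ha : a = i + 1 := by omega
      subst ha
      have hhigh : run (b+1) i * σ (b+i+2) = σ (b+i+2) * run (b+1) i := by
        have := run_comm_high b i (b+i) (le_refl _)
        rw [show b+i+2 = (b+i)+2 by omega]
        exact this
      have hbr := sigma_braid (b+i)
      rw [run_succ, run_succ, show b+1+(i+1) = b+i+2 by omega, show b+1+i = b+i+1 by omega]
      calc σ (b+i+2) * (σ (b+i+1) * run (b+1) i) * σ (b+i+2)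
          = σ (b+i+2) * σ (b+i+1) * (run (b+1) i * σ (b+i+2)) := by
            rw [mul_assoc, mul_assoc, mul_assoc]
        _ = σ (b+i+2) * σ (b+i+1) * σ (b+i+2) * run (b+1) i := by
            rw [hhigh]; group
        _ = σ (b+i+1) * σ (b+i+2) * σ (b+i+1) * run (b+1) i := by
            rw [show σ (b+i+2) * σ (b+i+1) * σ (b+i+2) = σ (b+i+1) * σ (b+i+2) * σ (b+i+1) from
              (sigma_braid (b+i)).symm]
        _ = σ (b+i+1) * (σ (b+i+2) * (σ (b+i+1) * run (b+1) i)) := by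
            rw [mul_assoc, mul_assoc]
    · -- i + 2 ≤ a
      have hc : σ (b+1+a) * σ (b+i+1) = σ (b+i+1) * σ (b+1+a) := by
        rw [show b+1+a = (b+a)+1 by omega, show b+i+1 = (b+i)+1 by omega]
        exact (sigma_comm (p := b+i) (q := b+a) (by omega)).symm
      rw [run_succ]
      calc σ (b+1+a) * run (b+1) a * σ (b+i+2)
          = σ (b+1+a) * (σ (b+i+1) * run (b+1) a) := by rw [mul_assoc, ih hlt]
        _ = σ (b+i+1) * (σ (b+1+a) * run (b+1) a) := by rw [← mul_assoc, hc, mul_assoc]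

lemma run_concat (b a c : ℕ) : run b (a + c) = run (b + c) a * run b c := by
  induction a with
  | zero => simp
  | succ a ih =>
    rw [show a+1+c = (a+c)+1 by omega, run_succ, ih, run_succ, show b+c+a = b+(a+c) by omega,
      mul_assoc]

lemma conj_run {g : BInf} {l l' N : ℕ}
    (H : ∀ i, 1 ≤ i → i ≤ N → g * σ (l + i) = σ (l' + i) * g) :
    ∀ a c, 1 ≤ c → c + a ≤ N + 1 → g * run (l + c) a = run (l' + c) a * g := by
  intro a
  induction a with
  | zero => intro c _ _; simp
  | succ a ih =>
    intro c hc hca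
    rw [run_succ, run_succ, show l+c+a = l+(c+a) by omega, show l'+c+a = l'+(c+a) by omega]
    calc g * (σ (l+(c+a)) * run (l+c) a)
        = (g * σ (l+(c+a))) * run (l+c) a := by rw [mul_assoc]
      _ = σ (l'+(c+a)) * (g * run (l+c) a) := by rw [H (c+a) (by omega) (by omega), mul_assoc]
      _ = σ (l'+(c+a)) * (run (l'+c) a * g) := by rw [ih c hc (by omega)]
      _ = σ (l'+(c+a)) * run (l'+c) a * g := by rw [mul_assoc]

lemma asc_one (i : ℕ) : asc i 1 = σ i := by simp [asc, List.range_succ]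

lemma beta_succ_one (k : ℕ) : β (k+1) 1 = σ (k+1) * β k 1 := by
  simp only [β, List.range_succ_eq_map, List.map_cons, List.prod_cons, List.map_map]
  rw [show k + 1 - 0 = k + 1 by omega, asc_one]
  have hm : List.map ((fun r => asc (k + 1 - r) 1) ∘ Nat.succ) (List.range k)
      = List.map (fun r => asc (k - r) 1) (List.range k) :=
    List.map_congr_left (fun r _ => by
      simp only [Function.comp_apply]
      rw [show k + 1 - Nat.succ r = k - r by omega])
  rw [hm]

lemma beta_one (k : ℕ) : β k 1 = run 1 k := by
  induction k with
  | zero => simp [β]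
  | succ k ih => rw [beta_succ_one, ih, run_succ, show (1:ℕ)+k = k+1 by omega]

lemma ι_mul (g h : BInf) : ι 𝕜 (g * h) = ι 𝕜 g * ι 𝕜 h :=
  map_mul (MonoidAlgebra.of 𝕜 BInf) g h

lemma shiftA_ι (l : ℕ) (g : BInf) : shiftA 𝕜 l (ι 𝕜 g) = ι 𝕜 (shift l g) := by
  simp only [shiftA, ι, MonoidAlgebra.of_apply, MonoidAlgebra.mapDomainAlgHom_apply,
    Finsupp.mapDomain_single, MonoidAlgebra.mapDomain_single]

lemma Sh_zero_left (b : ℕ) : Sh 𝕜 0 b = 1 := by rw [Sh]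

lemma Sh_zero_right (a : ℕ) : Sh 𝕜 a 0 = 1 := by cases a <;> rw [Sh]

lemma Sh_succ_succ (a b : ℕ) :
    Sh 𝕜 (a+1) (b+1) = Sh 𝕜 a (b+1) + Sh 𝕜 (a+1) b * ι 𝕜 (run (b+1) (a+1)) := by
  rw [Sh, beta_one]
  have h : shift b (run 1 (a+1)) = run (b+1) (a+1) := by
    have := shift_run b 0 (a+1)
    rw [show (0:ℕ)+1 = 1 by omega, show (0:ℕ)+1+b = b+1 by omega] at this
    exact this
  rw [h]

lemma shiftA_zero_Sh : ∀ a b : ℕ, shiftA 𝕜 0 (Sh 𝕜 a b) = Sh 𝕜 a b := by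
  intro a
  induction a with
  | zero => intro b; rw [Sh_zero_left]; exact map_one _
  | succ a iha =>
    intro b
    induction b with
    | zero => rw [Sh_zero_right]; exact map_one _
    | succ b ihb =>
      rw [Sh_succ_succ, map_add, map_mul, shiftA_ι, iha, ihb]
      have : shift 0 (run (b+1) (a+1)) = run (b+1) (a+1) := shift_run 0 b (a+1)
      rw [this]

lemma conj_Sh {g : BInf} {l l' N : ℕ}
    (H : ∀ i, 1 ≤ i → i ≤ N → g * σ (l + i) = σ (l' + i) * g) :
    ∀ a b : ℕ, a + b ≤ N + 1 →
      ι 𝕜 g * shiftA 𝕜 l (Sh 𝕜 a b) = shiftA 𝕜 l' (Sh 𝕜 a b) * ι 𝕜 g := by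
  intro a
  induction a with
  | zero => intro b _; rw [Sh_zero_left, map_one, map_one, one_mul, mul_one]
  | succ a iha =>
    intro b
    induction b with
    | zero => intro _; rw [Sh_zero_right, map_one, map_one, one_mul, mul_one]
    | succ b ihb =>
      intro hab
      have hr : ∀ t : ℕ, shift t (run (b+1) (a+1)) = run (t+(b+1)) (a+1) := by
        intro t
        rw [shift_run, show b+1+t = t+(b+1) by omega]
      have h3 : g * run (l+(b+1)) (a+1) = run (l'+(b+1)) (a+1) * g :=
        conj_run H (a+1) (b+1) (by omega) (by omega)
      rw [Sh_succ_succ, map_add, map_mul, map_add, map_mul, shiftA_ι, shiftA_ι, hr, hr,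
        mul_add, add_mul]
      congr 1
      · exact iha (b+1) (by omega)
      · calc ι 𝕜 g * (shiftA 𝕜 l (Sh 𝕜 (a+1) b) * ι 𝕜 (run (l+(b+1)) (a+1)))
            = (ι 𝕜 g * shiftA 𝕜 l (Sh 𝕜 (a+1) b)) * ι 𝕜 (run (l+(b+1)) (a+1)) := by
              rw [mul_assoc]
          _ = shiftA 𝕜 l' (Sh 𝕜 (a+1) b) * (ι 𝕜 g * ι 𝕜 (run (l+(b+1)) (a+1))) := by
              rw [ihb (by omega), mul_assoc]
          _ = shiftA 𝕜 l' (Sh 𝕜 (a+1) b) * (ι 𝕜 (run (l'+(b+1)) (a+1)) * ι 𝕜 g) := by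
              rw [← ι_mul, h3, ι_mul]
          _ = shiftA 𝕜 l' (Sh 𝕜 (a+1) b) * ι 𝕜 (run (l'+(b+1)) (a+1)) * ι 𝕜 g := by
              rw [mul_assoc]

/-- `Ш_{n+k,m} · Ш_{k,n}^{↑m} = Ш_{k,m+n} · Ш_{n,m}` in `𝕜B_∞`. -/
theorem shuffle_identity (k m n : ℕ) :
    Sh 𝕜 (n + k) m * shiftA 𝕜 m (Sh 𝕜 k n) = Sh 𝕜 k (m + n) * Sh 𝕜 n m := by
  have key : ∀ s k m n : ℕ, k + m + n ≤ s →
      Sh 𝕜 (n + k) m * shiftA 𝕜 m (Sh 𝕜 k n) = Sh 𝕜 k (m + n) * Sh 𝕜 n m := by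
    intro s
    induction s with
    | zero =>
      intro k m n h
      obtain rfl : k = 0 := by omega
      obtain rfl : m = 0 := by omega
      obtain rfl : n = 0 := by omega
      simp [Sh_zero_left]
    | succ s IH =>
      intro k m n h
      rcases k with _ | k
      · simp [Sh_zero_left]
      rcases m with _ | m
      · simp [Sh_zero_right, shiftA_zero_Sh]
      rcases n with _ | n
      · simp [Sh_zero_right, Sh_zero_left]
      -- main inductive step: k, m, n all positive
      rw [show n+1+(k+1) = n+k+1+1 by omega, show m+1+(n+1) = m+n+1+1 by omega]
      -- expansions via the defining recursion
      have hE1 : Sh 𝕜 (n+k+1+1) (m+1)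
          = Sh 𝕜 (n+k+1) (m+1) + Sh 𝕜 (n+k+1+1) m * ι 𝕜 (run (m+1) (n+k+1+1)) :=
        Sh_succ_succ 𝕜 (n+k+1) m
      have hE2 : shiftA 𝕜 (m+1) (Sh 𝕜 (k+1) (n+1))
          = shiftA 𝕜 (m+1) (Sh 𝕜 k (n+1))
            + shiftA 𝕜 (m+1) (Sh 𝕜 (k+1) n) * ι 𝕜 (run (m+n+1+1) (k+1)) := by
        rw [Sh_succ_succ 𝕜 k n, map_add, map_mul, shiftA_ι, shift_run,
          show n+1+(m+1) = m+n+1+1 by omega]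
      have hE3 : Sh 𝕜 (k+1) (m+n+1+1)
          = Sh 𝕜 k (m+n+1+1) + Sh 𝕜 (k+1) (m+n+1) * ι 𝕜 (run (m+n+1+1) (k+1)) :=
        Sh_succ_succ 𝕜 k (m+n+1)
      have hE4 : Sh 𝕜 (n+1) (m+1)
          = Sh 𝕜 n (m+1) + Sh 𝕜 (n+1) m * ι 𝕜 (run (m+1) (n+1)) :=
        Sh_succ_succ 𝕜 n m
      have hMid : shiftA 𝕜 m (Sh 𝕜 (k+1) (n+1))
          = shiftA 𝕜 m (Sh 𝕜 k (n+1))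
            + shiftA 𝕜 m (Sh 𝕜 (k+1) n) * ι 𝕜 (run (m+n+1) (k+1)) := by
        rw [Sh_succ_succ 𝕜 k n, map_add, map_mul, shiftA_ι, shift_run,
          show n+1+m = m+n+1 by omega]
      -- conjugation data for the long descending run d1 = run (m+1) (n+k+2)
      have hH : ∀ i, 1 ≤ i → i ≤ n+k+1 →
          run (m+1) (n+k+1+1) * σ (m+1+i) = σ (m+i) * run (m+1) (n+k+1+1) := by
        intro i h1 h2
        have hrc := run_conj m (n+k+1+1) (i-1) (by omega)
        rw [show m+(i-1)+2 = m+1+i by omega, show m+(i-1)+1 = m+i by omega] at hrc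
        exact hrc
      have hF3a : ι 𝕜 (run (m+1) (n+k+1+1)) * shiftA 𝕜 (m+1) (Sh 𝕜 k (n+1))
          = shiftA 𝕜 m (Sh 𝕜 k (n+1)) * ι 𝕜 (run (m+1) (n+k+1+1)) :=
        conj_Sh 𝕜 hH k (n+1) (by omega)
      have hF3b : ι 𝕜 (run (m+1) (n+k+1+1)) * shiftA 𝕜 (m+1) (Sh 𝕜 (k+1) n)
          = shiftA 𝕜 m (Sh 𝕜 (k+1) n) * ι 𝕜 (run (m+1) (n+k+1+1)) :=
        conj_Sh 𝕜 hH (k+1) n (by omega)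
      have hF2 : run (m+1) (n+k+1+1) * run (m+n+1+1) (k+1)
          = run (m+n+1) (k+1) * run (m+1) (n+k+1+1) := by
        have hcr := conj_run hH (k+1) (n+1) (by omega) (by omega)
        rw [show m+1+(n+1) = m+n+1+1 by omega, show m+(n+1) = m+n+1 by omega] at hcr
        exact hcr
      have hFd : ι 𝕜 (run (m+1) (n+k+1+1)) * ι 𝕜 (run (m+n+1+1) (k+1))
          = ι 𝕜 (run (m+n+1) (k+1)) * ι 𝕜 (run (m+1) (n+k+1+1)) := by
        rw [← ι_mul 𝕜, ← ι_mul 𝕜, hF2]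
      have hFcat : ι 𝕜 (run (m+n+1+1) (k+1)) * ι 𝕜 (run (m+1) (n+1))
          = ι 𝕜 (run (m+1) (n+k+1+1)) := by
        rw [← ι_mul 𝕜]
        congr 1
        have hcc := run_concat (m+1) (k+1) (n+1)
        rw [show k+1+(n+1) = n+k+1+1 by omega, show m+1+(n+1) = m+n+1+1 by omega] at hcc
        exact hcc.symm
      -- far commutation for d2 = run (m+n+2) (k+1)
      have hH2 : ∀ i, 1 ≤ i → i ≤ m+n →
          run (m+n+1+1) (k+1) * σ (0+i) = σ (0+i) * run (m+n+1+1) (k+1) := by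
        intro i h1 h2
        have hrl := run_comm_low (m+n+1) (k+1) (i-1) (by omega)
        rw [show i-1+1 = 0+i by omega] at hrl
        exact hrl
      have hF4a : ι 𝕜 (run (m+n+1+1) (k+1)) * Sh 𝕜 n (m+1)
          = Sh 𝕜 n (m+1) * ι 𝕜 (run (m+n+1+1) (k+1)) := by
        have hcs := conj_Sh 𝕜 hH2 n (m+1) (by omega)
        rw [shiftA_zero_Sh] at hcs
        exact hcs
      have hF4b : ι 𝕜 (run (m+n+1+1) (k+1)) * Sh 𝕜 (n+1) m
          = Sh 𝕜 (n+1) m * ι 𝕜 (run (m+n+1+1) (k+1)) := by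
        have hcs := conj_Sh 𝕜 hH2 (n+1) m (by omega)
        rw [shiftA_zero_Sh] at hcs
        exact hcs
      -- induction hypotheses
      have hIH1 : Sh 𝕜 (n+k+1) (m+1) * shiftA 𝕜 (m+1) (Sh 𝕜 k (n+1))
          = Sh 𝕜 k (m+n+1+1) * Sh 𝕜 (n+1) (m+1) := by
        have hi := IH k (m+1) (n+1) (by omega)
        rw [show n+1+k = n+k+1 by omega, show m+1+(n+1) = m+n+1+1 by omega] at hi
        exact hi
      have hIH2 : Sh 𝕜 (n+k+1) (m+1) * shiftA 𝕜 (m+1) (Sh 𝕜 (k+1) n)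
          = Sh 𝕜 (k+1) (m+n+1) * Sh 𝕜 n (m+1) := by
        have hi := IH (k+1) (m+1) n (by omega)
        rw [show n+(k+1) = n+k+1 by omega, show m+1+n = m+n+1 by omega] at hi
        exact hi
      have hIH3 : Sh 𝕜 (n+k+1+1) m * shiftA 𝕜 m (Sh 𝕜 (k+1) (n+1))
          = Sh 𝕜 (k+1) (m+n+1) * Sh 𝕜 (n+1) m := by
        have hi := IH (k+1) m (n+1) (by omega)
        rw [show n+1+(k+1) = n+k+1+1 by omega, show m+(n+1) = m+n+1 by omega] at hi
        exact hi
      rw [hMid] at hIH3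
      -- abbreviations
      set A := Sh 𝕜 (n+k+1) (m+1) with hsA
      set B := Sh 𝕜 (n+k+1+1) m with hsB
      set C := shiftA 𝕜 (m+1) (Sh 𝕜 k (n+1)) with hsC
      set D := shiftA 𝕜 (m+1) (Sh 𝕜 (k+1) n) with hsD
      set C' := shiftA 𝕜 m (Sh 𝕜 k (n+1)) with hsC'
      set D' := shiftA 𝕜 m (Sh 𝕜 (k+1) n) with hsD'
      set d1 := ι 𝕜 (run (m+1) (n+k+1+1)) with hsd1
      set d2 := ι 𝕜 (run (m+n+1+1) (k+1)) with hsd2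
      set d3 := ι 𝕜 (run (m+n+1) (k+1)) with hsd3
      set d4 := ι 𝕜 (run (m+1) (n+1)) with hsd4
      set P := Sh 𝕜 k (m+n+1+1) with hsP
      set Q := Sh 𝕜 (k+1) (m+n+1) with hsQ
      set R := Sh 𝕜 n (m+1) with hsR
      set S := Sh 𝕜 (n+1) (m+1) with hsS
      set U := Sh 𝕜 (n+1) m with hsU
      rw [hE1, hE2, hE3]
      calc (A + B * d1) * (C + D * d2)
          = A*C + A*D*d2 + (B*(d1*C) + B*((d1*D)*d2)) := by noncomm_ring
        _ = P*S + Q*R*d2 + (B*(C'*d1) + B*((D'*d1)*d2)) := by rw [hIH1, hIH2, hF3a, hF3b]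
        _ = P*S + Q*R*d2 + B*(C' + D'*d3)*d1 := by
            rw [mul_assoc D' d1 d2, hFd]; noncomm_ring
        _ = P*S + Q*R*d2 + Q*U*d1 := by rw [hIH3]
        _ = P*S + Q*(R*d2 + U*d1) := by noncomm_ring
        _ = P*S + Q*(d2*(R + U*d4)) := by
            rw [← hFcat, ← hF4a, show U*(d2*d4) = (d2*U)*d4 by rw [← mul_assoc, ← hF4b]]
            noncomm_ring
        _ = (P + Q*d2) * S := by rw [← hE4]; noncomm_ring
  exact key (k+m+n) k m n le_rfl

end BraidPaper
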